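/- (Shear transformation of points.) Let u, v, p ∈ EuclideanSpace ℝ (Fin 3) with ⟨u,v⟩ = 0, let C := E(u)∘E*(v) − E*(v)∘E(u), and let t ∈ ℝ. Then (id + (t/2)•C) ∘ (id + E(p)) ∘ (id − (t/2)•C) = id + E(p + t⟨p,v⟩•u). (Since C² = 0 when ⟨u,v⟩ = 0, the operator id + (t/2)•C equals e^{tC/2}, so this is the shear e^{t[u,v*]/2} P e^{t[u,v*]~/2} of the paper, which fixes the weight of the point and shears its location in the plane spanned by u and v.) -/

import Mathlib

open scoped RealInnerProductSpace

noncomputable section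

/-- Left exterior multiplication by a vector on the exterior algebra of `ℝ³`. -/
def wedgeOp (v : EuclideanSpace ℝ (Fin 3)) :
    ExteriorAlgebra ℝ (EuclideanSpace ℝ (Fin 3)) →ₗ[ℝ]
      ExteriorAlgebra ℝ (EuclideanSpace ℝ (Fin 3)) :=
  LinearMap.mulLeft ℝ (ExteriorAlgebra.ι ℝ v)

/-- Left contraction (interior product) along the functional `⟪v, ·⟫`. -/
def contrOp (v : EuclideanSpace ℝ (Fin 3)) :
    ExteriorAlgebra ℝ (EuclideanSpace ℝ (Fin 3)) →ₗ[ℝ]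
      ExteriorAlgebra ℝ (EuclideanSpace ℝ (Fin 3)) :=
  CliffordAlgebra.contractLeft (innerₗ (EuclideanSpace ℝ (Fin 3)) v)

lemma contr_wedge (v p : EuclideanSpace ℝ (Fin 3)) :
    contrOp v * wedgeOp p = (⟪v, p⟫ : ℝ) • (1 : Module.End ℝ _) - wedgeOp p * contrOp v := by
  refine LinearMap.ext fun x => ?_
  simp [contrOp, wedgeOp, Module.End.mul_apply, CliffordAlgebra.contractLeft_ι_mul]

lemma wedge_anticomm (u p : EuclideanSpace ℝ (Fin 3)) :
    wedgeOp u * wedgeOp p = -(wedgeOp p * wedgeOp u) := by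
  refine LinearMap.ext fun x => ?_
  have h := ExteriorAlgebra.ι_add_mul_swap (R := ℝ) u p
  simp only [wedgeOp, Module.End.mul_apply, LinearMap.mulLeft_apply, LinearMap.neg_apply]
  rw [← mul_assoc, ← mul_assoc, eq_neg_iff_add_eq_zero, ← add_mul, h, zero_mul]

lemma wedge_sq (u : EuclideanSpace ℝ (Fin 3)) : wedgeOp u * wedgeOp u = 0 := by
  refine LinearMap.ext fun x => ?_
  simp [wedgeOp, Module.End.mul_apply, ← mul_assoc, ExteriorAlgebra.ι_sq_zero]

lemma wedge_add (p q : EuclideanSpace ℝ (Fin 3)) : wedgeOp (p + q) = wedgeOp p + wedgeOp q := by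
  refine LinearMap.ext fun x => ?_; simp [wedgeOp, add_mul]

lemma wedge_smul (c : ℝ) (p : EuclideanSpace ℝ (Fin 3)) : wedgeOp (c • p) = c • wedgeOp p := by
  refine LinearMap.ext fun x => ?_; simp [wedgeOp, smul_mul_assoc]

lemma End_mul_neg (a b : Module.End ℝ (ExteriorAlgebra ℝ (EuclideanSpace ℝ (Fin 3)))) :
    a * -b = -(a * b) := mul_neg a b

lemma End_neg_mul (a b : Module.End ℝ (ExteriorAlgebra ℝ (EuclideanSpace ℝ (Fin 3)))) :
    -a * b = -(a * b) := neg_mul a b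

lemma End_neg_neg (a : Module.End ℝ (ExteriorAlgebra ℝ (EuclideanSpace ℝ (Fin 3)))) :
    -(-a) = a := neg_neg a

lemma End_neg_eq_zero (a : Module.End ℝ (ExteriorAlgebra ℝ (EuclideanSpace ℝ (Fin 3)))) :
    -a = 0 ↔ a = 0 := neg_eq_zero

lemma conj_expand {S : Type*} [Ring S] [Algebra ℝ S] (t : ℝ) (A B : S)
    (h1 : A * A = 0) (h2 : A * (B * A) = 0) :
    (1 + t • A) * ((1 + B) * (1 - t • A)) = 1 + B + t • (A * B) - t • (B * A) := by
  simp only [mul_add, mul_sub, add_mul, sub_mul, one_mul, mul_one, smul_mul_assoc,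
    mul_smul_comm, smul_smul, h1, h2, smul_zero, smul_add, smul_sub]
  abel

/-- shear transformation of points, generated by
`C = E(u)∘E*(v) − E*(v)∘E(u)` with `⟨u,v⟩ = 0`. -/
theorem shear_of_point (u v p : EuclideanSpace ℝ (Fin 3)) (huv : ⟪u, v⟫ = 0) (t : ℝ) :
    (LinearMap.id + (t / 2) • (wedgeOp u ∘ₗ contrOp v - contrOp v ∘ₗ wedgeOp u)) ∘ₗ
        (LinearMap.id + wedgeOp p) ∘ₗ
        (LinearMap.id - (t / 2) • (wedgeOp u ∘ₗ contrOp v - contrOp v ∘ₗ wedgeOp u))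
      = LinearMap.id + wedgeOp (p + (t * ⟪p, v⟫) • u) := by
  have hvu : (⟪v, u⟫ : ℝ) = 0 := by rwa [real_inner_comm]
  have hDWu : contrOp v * wedgeOp u = -(wedgeOp u * contrOp v) := by
    rw [contr_wedge, hvu]; simp
  have hAA : (wedgeOp u * contrOp v) * (wedgeOp u * contrOp v) = 0 := by
    rw [mul_assoc, ← mul_assoc (contrOp v), hDWu]
    simp only [End_neg_mul, End_mul_neg, End_neg_eq_zero, ← mul_assoc]
    rw [wedge_sq]; simp
  have hAWp : (wedgeOp u * contrOp v) * wedgeOp p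
      = (⟪v, p⟫ : ℝ) • wedgeOp u - wedgeOp u * wedgeOp p * contrOp v := by
    rw [mul_assoc, contr_wedge]
    simp [mul_sub, mul_smul_comm, mul_assoc]
  have hWpA : wedgeOp p * (wedgeOp u * contrOp v)
      = -(wedgeOp u * wedgeOp p * contrOp v) := by
    rw [← mul_assoc, wedge_anticomm p u, wedge_anticomm u p]
    simp only [End_neg_mul, End_neg_neg]
  have hAWpA : (wedgeOp u * contrOp v) * (wedgeOp p * (wedgeOp u * contrOp v)) = 0 := by
    rw [hWpA, End_mul_neg, End_neg_eq_zero]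
    rw [show wedgeOp u * wedgeOp p * contrOp v = wedgeOp u * (wedgeOp p * contrOp v) from
      mul_assoc _ _ _]
    rw [mul_assoc, ← mul_assoc (contrOp v), hDWu]
    simp only [End_neg_mul, End_mul_neg, End_neg_eq_zero]
    rw [← mul_assoc, ← mul_assoc, ← mul_assoc, wedge_sq]
    simp
  have hC : wedgeOp u ∘ₗ contrOp v - contrOp v ∘ₗ wedgeOp u
      = (2 : ℝ) • (wedgeOp u * contrOp v) := by
    show wedgeOp u * contrOp v - contrOp v * wedgeOp u = _
    rw [hDWu]; module
  rw [real_inner_comm p v] at hAWp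
  rw [hC, wedge_add, wedge_smul]
  have hs : (t / 2) • ((2 : ℝ) • (wedgeOp u * contrOp v)) = t • (wedgeOp u * contrOp v) := by
    rw [smul_smul]; norm_num
  show (1 + (t / 2) • ((2:ℝ) • (wedgeOp u * contrOp v)))
      * ((1 + wedgeOp p) * (1 - (t / 2) • ((2:ℝ) • (wedgeOp u * contrOp v))))
    = 1 + (wedgeOp p + (t * ⟪p, v⟫) • wedgeOp u)
  have hWuA : wedgeOp u * (wedgeOp u * contrOp v) = 0 := by
    rw [← mul_assoc, wedge_sq, zero_mul]
  have hBA : (wedgeOp u * wedgeOp p * contrOp v) * (wedgeOp u * contrOp v) = 0 := by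
    rw [mul_assoc (wedgeOp u * wedgeOp p), ← mul_assoc (contrOp v), hDWu]
    simp only [End_neg_mul, End_mul_neg, End_neg_eq_zero]
    rw [← mul_assoc, ← mul_assoc, mul_assoc (wedgeOp u), wedge_anticomm p u]
    simp only [End_mul_neg, End_neg_mul, End_neg_eq_zero, ← mul_assoc]
    rw [wedge_sq]; simp
  rw [hs, conj_expand t _ _ hAA hAWpA, hAWp, hWpA]
  module

end
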